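/- If moreover λ is graded-cocommutative (τλ = (-1)^{|λ|}λ) in a unital coFrobenius bialgebra, then β = (1⊗μ⊗1)(c⊗c) additionally satisfies τ₁₂ β = (-1)^{|λ|} β, where τ₁₂ transposes the first two factors with Koszul sign; thus β : R → A⊗A⊗A is S₃-equivariant for the sign representation if |λ| is odd and the trivial representation if |λ| is even. -/

import Mathlib

open TensorProduct LinearMap
open scoped TensorProduct DirectSum

namespace GradedCoFrob

variable {R : Type} [CommRing R] {M : Type} [AddCommGroup M] [Module R M]

/-- The Koszul sign `(-1)^n` for `n : ℤ`. -/
def ksign (n : ℤ) : ℤ := (((-1 : ℤˣ) ^ n : ℤˣ) : ℤ)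

variable (𝒜 : ℤ → Submodule R M) [DirectSum.Decomposition 𝒜]

/-- Build a linear map `M →ₗ N` out of its values on the homogeneous pieces,
bundled linearly in the family of values. -/
noncomputable def fromPiecesHom {N : Type} [AddCommGroup N] [Module R N] :
    (∀ i : ℤ, 𝒜 i →ₗ[R] N) →ₗ[R] (M →ₗ[R] N) :=
  (LinearMap.lcomp R N (DirectSum.decomposeLinearEquiv 𝒜).toLinearMap).comp
    (DFinsupp.lsum R (M := fun i => 𝒜 i) (N := N)).toLinearMap

/-- Build a linear map `M →ₗ N` out of its values on the homogeneous pieces. -/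
noncomputable def fromPieces {N : Type} [AddCommGroup N] [Module R N]
    (f : ∀ i : ℤ, 𝒜 i →ₗ[R] N) : M →ₗ[R] N :=
  fromPiecesHom 𝒜 f

/-- Build a bilinear map `M →ₗ M →ₗ N` out of its values on pairs of homogeneous pieces. -/
noncomputable def fromPieces₂ {N : Type} [AddCommGroup N] [Module R N]
    (f : ∀ i j : ℤ, 𝒜 i →ₗ[R] 𝒜 j →ₗ[R] N) : M →ₗ[R] M →ₗ[R] N :=
  fromPieces 𝒜 (fun i => (fromPiecesHom 𝒜).comp (LinearMap.pi (fun j => f i j)))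

/-- The operator multiplying the degree `i` component by the Koszul sign `(-1)^(d*i)`. -/
noncomputable def signAction (d : ℤ) : M →ₗ[R] M :=
  fromPieces 𝒜 (fun i => ksign (d * i) • (𝒜 i).subtype)

/-- The Koszul twist `τ(a ⊗ b) = (-1)^{|a||b|} b ⊗ a`. -/
noncomputable def twist : M ⊗[R] M →ₗ[R] M ⊗[R] M :=
  TensorProduct.lift (fromPieces₂ 𝒜 (fun i j =>
    ksign (i * j) • ((((TensorProduct.mk R M M).flip).comp (𝒜 i).subtype).compl₂
      (𝒜 j).subtype)))

/-- Left contraction `(f ⊗ 1)(x ⊗ y) = f(x) • y` (no Koszul sign since `1` has degree `0`). -/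
noncomputable def contrL {N : Type} [AddCommGroup N] [Module R N]
    (f : N →ₗ[R] R) : N ⊗[R] M →ₗ[R] M :=
  TensorProduct.lift ((LinearMap.lsmul R M).comp f)

/-- Right contraction with Koszul sign:
`(1 ⊗ f)(x ⊗ y) = (-1)^{d|x|} f(y) • x` where `d` is the degree of `f`. -/
noncomputable def contrR {N : Type} [AddCommGroup N] [Module R N]
    (f : N →ₗ[R] R) (d : ℤ) : M ⊗[R] N →ₗ[R] M :=
  TensorProduct.lift ((((LinearMap.lsmul R M).comp f).flip).comp (signAction 𝒜 d))

/-- Koszul-signed evaluation of a pair of functionals on a tensor: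
`(x ⊗ y) ↦ f((-1)^{d₁|x|} x) * g((-1)^{d₂|y|} y)`. -/
noncomputable def ev2 (f g : M →ₗ[R] R) (d₁ d₂ : ℤ) : M ⊗[R] M →ₗ[R] R :=
  TensorProduct.lift (((LinearMap.mul R R).comp (f.comp (signAction 𝒜 d₁))).compl₂
    (g.comp (signAction 𝒜 d₂)))

/-- The map `c⃗ : A^∨ → A`, `f ↦ (-1)^{|f||c|}(f ⊗ 1)c`, implemented by putting the sign
`(-1)^{dc |x|}` on the first tensor factor of the copairing `c` (of degree `dc`). -/
noncomputable def cvec (c : M ⊗[R] M) (dc : ℤ) : (M →ₗ[R] R) →ₗ[R] M :=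
  (LinearMap.applyₗ ((LinearMap.rTensor M (signAction 𝒜 dc)) c)).comp
    ((TensorProduct.lift.equiv (RingHom.id R) M M M).toLinearMap.comp
      (LinearMap.llcomp R M R (M →ₗ[R] M) (LinearMap.lsmul R M)))

/-- The operation `(1 ⊗ c ⊗ 1) : A ⊗ A → (A ⊗ A) ⊗ (A ⊗ A)`,
`a ⊗ b ↦ (-1)^{|c||a|} (a ⊗ c₁) ⊗ (c₂ ⊗ b)` for a copairing `c` of degree `dc`. -/
noncomputable def midIns (c : M ⊗[R] M) (dc : ℤ) :
    M ⊗[R] M →ₗ[R] (M ⊗[R] M) ⊗[R] (M ⊗[R] M) :=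
  (TensorProduct.assoc R (M ⊗[R] M) M M).toLinearMap.comp
    (LinearMap.rTensor M
      (((TensorProduct.assoc R M M M).symm.toLinearMap).comp
        (((TensorProduct.mk R M (M ⊗[R] M)).flip c).comp (signAction 𝒜 dc))))

/-- The Koszul-signed cyclic permutation `σ(a⊗b⊗c) = (-1)^{(|a|+|b|)|c|} c⊗a⊗b`. -/
noncomputable def cyc : (M ⊗[R] M) ⊗[R] M →ₗ[R] (M ⊗[R] M) ⊗[R] M :=
  (LinearMap.rTensor M (twist 𝒜)).comp
    ((TensorProduct.assoc R M M M).symm.toLinearMap.comp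
      ((LinearMap.lTensor M (twist 𝒜)).comp (TensorProduct.assoc R M M M).toLinearMap))

/-- The submodule `A_i ⊗ A_j ⊆ A ⊗ A`. -/
noncomputable def tpiece (i j : ℤ) : Submodule R (M ⊗[R] M) :=
  LinearMap.range (TensorProduct.map (𝒜 i).subtype (𝒜 j).subtype)

/-- The degree `k` part `⨁_{i+j=k} A_i ⊗ A_j` of `A ⊗ A`. -/
noncomputable def tgrade (k : ℤ) : Submodule R (M ⊗[R] M) :=
  ⨆ i : ℤ, tpiece 𝒜 i (k - i)

/-- A product is homogeneous of degree `d`. -/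
def IsHomogProd (d : ℤ) (mu : M ⊗[R] M →ₗ[R] M) : Prop :=
  ∀ i j : ℤ, ∀ x ∈ 𝒜 i, ∀ y ∈ 𝒜 j, mu (x ⊗ₜ[R] y) ∈ 𝒜 (i + j + d)

/-- A coproduct is homogeneous of degree `d`. -/
def IsHomogCoprod (d : ℤ) (lam : M →ₗ[R] M ⊗[R] M) : Prop :=
  ∀ k : ℤ, ∀ x ∈ 𝒜 k, lam x ∈ tgrade 𝒜 (k + d)

/-- A scalar-valued functional is homogeneous of degree `d`. -/
def IsHomogFun (d : ℤ) (f : M →ₗ[R] R) : Prop :=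
  ∀ i : ℤ, i ≠ -d → ∀ x ∈ 𝒜 i, f x = 0

/-- A pairing is homogeneous of degree `d`. -/
def IsHomogPairing (d : ℤ) (p : M ⊗[R] M →ₗ[R] R) : Prop :=
  ∀ i j : ℤ, i + j ≠ -d → ∀ x ∈ 𝒜 i, ∀ y ∈ 𝒜 j, p (x ⊗ₜ[R] y) = 0

end GradedCoFrob
namespace GradedCoFrob

/-- A unital coFrobenius bialgebra structure on a ℤ-graded module
(Definition `defi:coFrobenius-unital-bialgebra`), with all Koszul sign conventions explicit. -/
structure UnitalCoFrob (R : Type) [CommRing R] {M : Type} [AddCommGroup M] [Module R M]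
    (𝒜 : ℤ → Submodule R M) [DirectSum.Decomposition 𝒜] where
  mu : M ⊗[R] M →ₗ[R] M
  lam : M →ₗ[R] M ⊗[R] M
  unit : M
  dm : ℤ
  dl : ℤ
  mu_homog : IsHomogProd 𝒜 dm mu
  lam_homog : IsHomogCoprod 𝒜 dl lam
  unit_homog : unit ∈ 𝒜 (-dm)
  /-- graded associativity `μ(μ⊗1) = (-1)^{|μ|} μ(1⊗μ)` -/
  mu_assoc : mu.comp (LinearMap.rTensor M mu) =
    ksign dm • (mu.comp ((TensorProduct.map (signAction 𝒜 dm) mu).comp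
      (TensorProduct.assoc R M M M).toLinearMap))
  /-- `(-1)^{|μ|} μ(η ⊗ 1) = 1` -/
  unit_left : ksign dm • (mu.comp ((TensorProduct.mk R M M) unit)) = LinearMap.id
  /-- `μ(1 ⊗ η) = 1` -/
  unit_right : mu.comp (((TensorProduct.mk R M M).flip unit).comp (signAction 𝒜 (-dm))) =
    LinearMap.id
  cop : M ⊗[R] M
  /-- the copairing `c = (-1)^{|λ||μ|+|μ|} λη` -/
  cop_def : cop = ksign (dl * dm + dm) • lam unit
  /-- `λ = (1⊗μ)(c⊗1)` -/
  cofrob_left : lam = (TensorProduct.map (signAction 𝒜 dm) mu).comp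
    ((TensorProduct.assoc R M M M).toLinearMap.comp (TensorProduct.mk R (M ⊗[R] M) M cop))
  /-- `λ = (-1)^{|μ|}(μ⊗1)(1⊗c)` -/
  cofrob_right : lam = ksign dm • ((LinearMap.rTensor M mu).comp
    ((TensorProduct.assoc R M M M).symm.toLinearMap.comp
      (((TensorProduct.mk R M (M ⊗[R] M)).flip cop).comp (signAction 𝒜 (dl - dm)))))
  /-- `τc = (-1)^{|λ|} c` -/
  cop_symm : twist 𝒜 cop = ksign dl • cop

/-- A biunital coFrobenius bialgebra structure on a ℤ-graded module
(Definition `defi:biunital-coFrobenius-bialgebra`), with all Koszul sign conventions explicit. -/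
structure BiunitalCoFrob (R : Type) [CommRing R] {M : Type} [AddCommGroup M] [Module R M]
    (𝒜 : ℤ → Submodule R M) [DirectSum.Decomposition 𝒜] where
  mu : M ⊗[R] M →ₗ[R] M
  lam : M →ₗ[R] M ⊗[R] M
  unit : M
  counit : M →ₗ[R] R
  dm : ℤ
  dl : ℤ
  mu_homog : IsHomogProd 𝒜 dm mu
  lam_homog : IsHomogCoprod 𝒜 dl lam
  unit_homog : unit ∈ 𝒜 (-dm)
  counit_homog : IsHomogFun 𝒜 (-dl) counit
  mu_assoc : mu.comp (LinearMap.rTensor M mu) =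
    ksign dm • (mu.comp ((TensorProduct.map (signAction 𝒜 dm) mu).comp
      (TensorProduct.assoc R M M M).toLinearMap))
  /-- graded coassociativity `(λ⊗1)λ = (-1)^{|λ|}(1⊗λ)λ` -/
  lam_coassoc : (LinearMap.rTensor M lam).comp lam =
    ksign dl • ((TensorProduct.assoc R M M M).symm.toLinearMap.comp
      ((TensorProduct.map (signAction 𝒜 dl) lam).comp lam))
  unit_left : ksign dm • (mu.comp ((TensorProduct.mk R M M) unit)) = LinearMap.id
  unit_right : mu.comp (((TensorProduct.mk R M M).flip unit).comp (signAction 𝒜 (-dm))) =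
    LinearMap.id
  /-- `(ε⊗1)λ = 1` -/
  counit_left : (contrL counit).comp lam = LinearMap.id
  /-- `(-1)^{|λ|}(1⊗ε)λ = 1` -/
  counit_right : ksign dl • ((contrR 𝒜 counit (-dl)).comp lam) = LinearMap.id
  cop : M ⊗[R] M
  cop_def : cop = ksign (dl * dm + dm) • lam unit
  pr : M ⊗[R] M →ₗ[R] R
  /-- the pairing `p = (-1)^{|λ|} εμ` -/
  pr_def : pr = ksign dl • (counit.comp mu)
  cofrob_left : lam = (TensorProduct.map (signAction 𝒜 dm) mu).comp
    ((TensorProduct.assoc R M M M).toLinearMap.comp (TensorProduct.mk R (M ⊗[R] M) M cop))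
  cofrob_right : lam = ksign dm • ((LinearMap.rTensor M mu).comp
    ((TensorProduct.assoc R M M M).symm.toLinearMap.comp
      (((TensorProduct.mk R M (M ⊗[R] M)).flip cop).comp (signAction 𝒜 (dl - dm)))))
  /-- `μ = (-1)^{|μ||λ|+|λ|}(p⊗1)(1⊗λ)` -/
  cofrob_pr_left : mu = ksign (dm * dl + dl) • ((contrL pr).comp
    ((TensorProduct.assoc R M M M).symm.toLinearMap.comp
      (TensorProduct.map (signAction 𝒜 dl) lam)))
  /-- `μ = (-1)^{|μ||λ|}(1⊗p)(λ⊗1)` -/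
  cofrob_pr_right : mu = ksign (dm * dl) • ((contrR 𝒜 pr (dm - dl)).comp
    ((TensorProduct.assoc R M M M).toLinearMap.comp (LinearMap.rTensor M lam)))
  cop_symm : twist 𝒜 cop = ksign dl • cop
  /-- `pτ = (-1)^{|μ|} p` -/
  pr_symm : pr.comp (twist 𝒜) = ksign dm • pr

end GradedCoFrob



namespace GradedCoFrob
variable {R : Type} [CommRing R] {M : Type} [AddCommGroup M] [Module R M]
variable (𝒜 : ℤ → Submodule R M) [DirectSum.Decomposition 𝒜]

lemma ksign_mul_self (n : ℤ) : ksign n * ksign n = 1 := by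
  unfold ksign; rw [← Units.val_mul, Int.units_mul_self]; rfl

lemma ksign_add (m n : ℤ) : ksign (m + n) = ksign m * ksign n := by
  unfold ksign; rw [← Units.val_mul, ← zpow_add]

lemma ksign_two_mul (n : ℤ) : ksign (2 * n) = 1 := by
  unfold ksign
  rw [zpow_mul, zpow_two, Int.units_mul_self, one_zpow]; rfl

lemma ksign_sq (n : ℤ) : ksign (n * n) = ksign n := by
  rcases Int.even_or_odd n with ⟨k, hk⟩ | ⟨k, hk⟩
  · subst hk
    have h1 : (k + k) * (k + k) = 2 * (2 * k * k) := by ring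
    have h2 : (k : ℤ) + k = 2 * k := by ring
    rw [h1, ksign_two_mul, h2, ksign_two_mul]
  · subst hk
    have h1 : (2 * k + 1) * (2 * k + 1) = (2 * (2 * k * k + k)) + (2 * k + 1) := by ring
    rw [h1, ksign_add, ksign_two_mul, one_mul]

lemma ksign_smul_smul {α : Type*} [AddCommGroup α] (m n : ℤ) (x : α) :
    ksign m • ksign n • x = ksign (m + n) • x := by
  rw [smul_smul, ← ksign_add]

lemma ksign_ksign_smul {α : Type*} [AddCommGroup α] (m : ℤ) (x : α) :
    ksign m • ksign m • x = x := by
  rw [smul_smul, ksign_mul_self, one_smul]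

lemma fromPieces_apply {N : Type} [AddCommGroup N] [Module R N]
    (f : ∀ i : ℤ, 𝒜 i →ₗ[R] N) {i : ℤ} (x : 𝒜 i) :
    fromPieces 𝒜 f (x : M) = f i x := by
  unfold fromPieces fromPiecesHom
  simp only [LinearMap.comp_apply, LinearMap.lcomp_apply, LinearEquiv.coe_coe,
    DirectSum.decomposeLinearEquiv_apply, DirectSum.decompose_coe, LinearEquiv.coe_toLinearMap]
  exact DFinsupp.lsum_single (S := R) f i x

lemma signAction_of_mem {d i : ℤ} {x : M} (hx : x ∈ 𝒜 i) :
    signAction 𝒜 d x = ksign (d * i) • x := by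
  have := fromPieces_apply 𝒜 (fun i => ksign (d * i) • (𝒜 i).subtype) (⟨x, hx⟩ : 𝒜 i)
  simpa [signAction] using this

lemma twist_tmul {i j : ℤ} {x y : M} (hx : x ∈ 𝒜 i) (hy : y ∈ 𝒜 j) :
    twist 𝒜 (x ⊗ₜ[R] y) = ksign (i * j) • (y ⊗ₜ[R] x) := by
  unfold twist fromPieces₂
  rw [TensorProduct.lift.tmul]
  rw [fromPieces_apply 𝒜 _ (⟨x, hx⟩ : 𝒜 i)]
  simp only [LinearMap.comp_apply, LinearMap.pi_apply]
  rw [show (fromPiecesHom 𝒜) ((pi fun j => ksign (i * j) • ((TensorProduct.mk R M M).flip ∘ₗ (𝒜 i).subtype).compl₂ (𝒜 j).subtype) ⟨x, hx⟩) = fromPieces 𝒜 (fun j => (pi fun j => ksign (i * j) • ((TensorProduct.mk R M M).flip ∘ₗ (𝒜 i).subtype).compl₂ (𝒜 j).subtype) ⟨x, hx⟩ j) from rfl]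
  rw [fromPieces_apply 𝒜 _ (⟨y, hy⟩ : 𝒜 j)]
  simp [TensorProduct.mk_apply]

lemma signAction_signAction (d : ℤ) (x : M) :
    signAction 𝒜 d (signAction 𝒜 d x) = x := by
  induction x using DirectSum.Decomposition.inductionOn 𝒜 with
  | zero => simp
  | homogeneous m =>
    rw [signAction_of_mem 𝒜 m.2, map_zsmul, signAction_of_mem 𝒜 m.2, ksign_ksign_smul]
  | add x y hx hy => rw [map_add, map_add, hx, hy]

lemma tgrade_induction {k : ℤ} {P : M ⊗[R] M → Prop} (h0 : P 0)
    (hadd : ∀ a b, P a → P b → P (a + b))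
    (htmul : ∀ (i j : ℤ) (x y : M), x ∈ 𝒜 i → y ∈ 𝒜 j → i + j = k → P (x ⊗ₜ[R] y))
    {v : M ⊗[R] M} (hv : v ∈ tgrade 𝒜 k) : P v := by
  refine Submodule.iSup_induction (motive := P) _ hv (fun i w hw => ?_) h0 (by exact hadd)
  obtain ⟨t, rfl⟩ := hw
  induction t with
  | zero => simpa using h0
  | tmul x y =>
    simpa using htmul i (k - i) x y x.2 y.2 (by ring)
  | add a b ha hb => rw [map_add]; exact hadd _ _ ha hb

lemma cyc_tmul_of_mem {k j : ℤ} {v : M ⊗[R] M} {y : M}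
    (hv : v ∈ tgrade 𝒜 k) (hy : y ∈ 𝒜 j) :
    cyc 𝒜 (v ⊗ₜ[R] y) =
      ksign (k * j) • (TensorProduct.assoc R M M M).symm (y ⊗ₜ[R] v) := by
  refine tgrade_induction 𝒜 (P := fun v => cyc 𝒜 (v ⊗ₜ[R] y) =
      ksign (k * j) • (TensorProduct.assoc R M M M).symm (y ⊗ₜ[R] v)) ?_ ?_ ?_ hv
  · simp; exact (smul_zero _).symm
  · intro a b ha hb
    rw [add_tmul, map_add, ha, hb, tmul_add, map_add]; exact (smul_add _ _ _).symm
  · intro p q a b hap hbq hpq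
    simp only [cyc, LinearMap.comp_apply, LinearEquiv.coe_coe]
    rw [TensorProduct.assoc_tmul, LinearMap.lTensor_tmul, twist_tmul 𝒜 hbq hy,
      tmul_smul, map_zsmul, map_zsmul, TensorProduct.assoc_symm_tmul,
      LinearMap.rTensor_tmul, twist_tmul 𝒜 hap hy, ← smul_tmul',
      TensorProduct.assoc_symm_tmul]
    erw [smul_smul]
    rw [← ksign_add, ← hpq]
    ring_nf

lemma map_sign_sign_of_tgrade {a b k : ℤ} {v : M ⊗[R] M} (hv : v ∈ tgrade 𝒜 k) :
    TensorProduct.map (signAction 𝒜 a) (signAction 𝒜 b) v =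
      ksign (b * k) • (LinearMap.rTensor M (signAction 𝒜 (a + b))) v := by
  refine tgrade_induction 𝒜 (P := fun v =>
    TensorProduct.map (signAction 𝒜 a) (signAction 𝒜 b) v =
      ksign (b * k) • (LinearMap.rTensor M (signAction 𝒜 (a + b))) v) ?_ ?_ ?_ hv
  · simp
  · intro u w hu hw
    rw [map_add, map_add, smul_add, hu, hw]
  · intro i j x y hxi hyj hij
    rw [TensorProduct.map_tmul, LinearMap.rTensor_tmul,
      signAction_of_mem 𝒜 hxi, signAction_of_mem 𝒜 hyj, signAction_of_mem 𝒜 hxi,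
      ← smul_tmul', tmul_smul, ← smul_tmul', smul_smul, smul_smul, ← ksign_add, ← ksign_add]
    have : a * i + b * j = (b * k + (a + b) * i) + 2 * (-(b * i)) := by
      rw [← hij]; ring
    rw [this, ksign_add, ksign_two_mul, mul_one]

lemma cyc_rTensor (lam : M →ₗ[R] M ⊗[R] M) (dl : ℤ) (hl : IsHomogCoprod 𝒜 dl lam) :
    (cyc 𝒜).comp (LinearMap.rTensor M lam) =
      (TensorProduct.assoc R M M M).symm.toLinearMap.comp
        ((LinearMap.lTensor M lam).comp
          ((LinearMap.rTensor M (signAction 𝒜 dl)).comp (twist 𝒜))) := by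
  apply TensorProduct.ext'
  intro x y
  induction x using DirectSum.Decomposition.inductionOn 𝒜 with
  | zero => simp
  | add x₁ x₂ h₁ h₂ =>
    simp only [LinearMap.comp_apply] at h₁ h₂ ⊢
    rw [add_tmul, map_add, map_add, map_add, map_add, map_add, map_add, h₁, h₂]
  | homogeneous m =>
    induction y using DirectSum.Decomposition.inductionOn 𝒜 with
    | zero => simp
    | add y₁ y₂ h₁ h₂ =>
      simp only [LinearMap.comp_apply] at h₁ h₂ ⊢
      rw [tmul_add, map_add, map_add, map_add, map_add, map_add, map_add, h₁, h₂]
    | homogeneous n =>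
      simp only [LinearMap.comp_apply, LinearEquiv.coe_coe]
      rw [LinearMap.rTensor_tmul, cyc_tmul_of_mem 𝒜 (hl _ _ m.2) n.2,
        twist_tmul 𝒜 m.2 n.2, map_zsmul, map_zsmul, map_zsmul,
        LinearMap.rTensor_tmul, signAction_of_mem 𝒜 n.2, ← smul_tmul',
        map_zsmul, map_zsmul, LinearMap.lTensor_tmul, smul_smul, ← ksign_add]
      ring_nf

end GradedCoFrob


namespace GradedCoFrob
variable {R : Type} [CommRing R] {M : Type} [AddCommGroup M] [Module R M]
variable (𝒜 : ℤ → Submodule R M) [DirectSum.Decomposition 𝒜]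

lemma cop_grade (U : UnitalCoFrob R 𝒜) : U.cop ∈ tgrade 𝒜 (U.dl - U.dm) := by
  rw [U.cop_def]
  have h := U.lam_homog (-U.dm) U.unit U.unit_homog
  rw [show -U.dm + U.dl = U.dl - U.dm from by ring] at h
  exact zsmul_mem h _

lemma bigF_cop_left (U : UnitalCoFrob R 𝒜) (z : M ⊗[R] M) :
    ((LinearMap.rTensor M (TensorProduct.map (signAction 𝒜 U.dm) U.mu)).comp
        ((LinearMap.rTensor M (TensorProduct.assoc R M M M).toLinearMap).comp
          (TensorProduct.assoc R (M ⊗[R] M) M M).symm.toLinearMap))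
      (U.cop ⊗ₜ[R] z) = LinearMap.rTensor M U.lam z := by
  induction z with
  | zero => simp
  | tmul u v =>
    simp only [LinearMap.comp_apply, LinearEquiv.coe_coe]
    rw [TensorProduct.assoc_symm_tmul, LinearMap.rTensor_tmul, LinearMap.rTensor_tmul,
      LinearMap.rTensor_tmul]
    congr 1
    have h := LinearMap.congr_fun U.cofrob_left u
    simp only [LinearMap.comp_apply, LinearEquiv.coe_coe, TensorProduct.mk_apply] at h
    exact h.symm
  | add a b ha hb => rw [tmul_add, map_add, map_add, ha, hb]

lemma bigF_tmul (U : UnitalCoFrob R 𝒜) (x y : M) (z : M ⊗[R] M) :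
    ((LinearMap.rTensor M (TensorProduct.map (signAction 𝒜 U.dm) U.mu)).comp
        ((LinearMap.rTensor M (TensorProduct.assoc R M M M).toLinearMap).comp
          (TensorProduct.assoc R (M ⊗[R] M) M M).symm.toLinearMap))
      ((x ⊗ₜ[R] y) ⊗ₜ[R] z) =
      (TensorProduct.assoc R M M M).symm ((signAction 𝒜 U.dm x) ⊗ₜ[R]
        (LinearMap.rTensor M U.mu ((TensorProduct.assoc R M M M).symm (y ⊗ₜ[R] z)))) := by
  induction z with
  | zero => simp
  | tmul u v =>
    simp only [LinearMap.comp_apply, LinearEquiv.coe_coe, LinearEquiv.coe_toLinearMap,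
      TensorProduct.assoc_symm_tmul, LinearMap.rTensor_tmul, TensorProduct.assoc_tmul,
      TensorProduct.map_tmul]
  | add a b ha hb => simp only [tmul_add, map_add, ha, hb]

lemma key_B (U : UnitalCoFrob R 𝒜) :
    LinearMap.rTensor M U.lam U.cop =
      ksign U.dl • ((TensorProduct.assoc R M M M).symm
        ((LinearMap.lTensor M U.lam) ((LinearMap.rTensor M (signAction 𝒜 U.dl)) U.cop))) := by
  have hJ : ∀ y : M, LinearMap.rTensor M U.mu ((TensorProduct.assoc R M M M).symm
      (y ⊗ₜ[R] U.cop)) = ksign U.dm • U.lam (signAction 𝒜 (U.dl - U.dm) y) := by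
    intro y
    have h := LinearMap.congr_fun U.cofrob_right (signAction 𝒜 (U.dl - U.dm) y)
    simp only [LinearMap.comp_apply, LinearMap.smul_apply, LinearEquiv.coe_coe,
      LinearMap.flip_apply, TensorProduct.mk_apply] at h
    rw [signAction_signAction] at h
    rw [h, ksign_ksign_smul]
  have hL : ∀ w : M ⊗[R] M,
      ((LinearMap.rTensor M (TensorProduct.map (signAction 𝒜 U.dm) U.mu)).comp
        ((LinearMap.rTensor M (TensorProduct.assoc R M M M).toLinearMap).comp
          (TensorProduct.assoc R (M ⊗[R] M) M M).symm.toLinearMap))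
      (w ⊗ₜ[R] U.cop) = ksign U.dm • ((TensorProduct.assoc R M M M).symm
        ((TensorProduct.map (signAction 𝒜 U.dm)
          (U.lam ∘ₗ signAction 𝒜 (U.dl - U.dm))) w)) := by
    intro w
    induction w with
    | zero => simp; exact (smul_zero _).symm
    | tmul x y =>
      rw [bigF_tmul 𝒜 U, hJ, tmul_smul, map_zsmul, TensorProduct.map_tmul]
      rfl
    | add a b ha hb => rw [add_tmul, map_add, ha, hb, map_add, map_add]; exact (smul_add _ _ _).symm
  have h1 := hL U.cop
  rw [bigF_cop_left 𝒜 U U.cop] at h1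
  rw [h1]
  have hcomp : TensorProduct.map (signAction 𝒜 U.dm) (U.lam ∘ₗ signAction 𝒜 (U.dl - U.dm)) =
      (LinearMap.lTensor M U.lam) ∘ₗ
        (TensorProduct.map (signAction 𝒜 U.dm) (signAction 𝒜 (U.dl - U.dm))) := by
    apply TensorProduct.ext'
    intro x y
    simp
  rw [hcomp, LinearMap.comp_apply,
    map_sign_sign_of_tgrade 𝒜 (cop_grade 𝒜 U), map_zsmul, map_zsmul,
    ksign_sq, ksign_smul_smul,
    show U.dm + (U.dl - U.dm) = U.dl from by ring]

end GradedCoFrob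

namespace GradedCoFrob

/-- If moreover `λ` is graded-cocommutative (`τλ = (-1)^{|λ|}λ`) in a unital
coFrobenius bialgebra, then `β = (1⊗μ⊗1)(c⊗c)` additionally satisfies
`τ₁₂β = (-1)^{|λ|}β`; together with `σβ = β` this makes `β : R → A⊗A⊗A` equivariant for
the `S₃`-action, with the sign representation if `|λ|` is odd and the trivial
representation if `|λ|` is even. -/
theorem beta_S3_equivariant {R : Type} [CommRing R] {M : Type} [AddCommGroup M]
    [Module R M] [Module.Free R M] [Module.Finite R M]
    (𝒜 : ℤ → Submodule R M) [DirectSum.Decomposition 𝒜]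
    (U : UnitalCoFrob R 𝒜)
    (hcocomm : (twist 𝒜).comp U.lam = ksign U.dl • U.lam) :
    -- τ₁₂ β = (-1)^{|λ|} β
    (LinearMap.rTensor M (twist 𝒜)
      (((LinearMap.rTensor M (TensorProduct.map (signAction 𝒜 U.dm) U.mu)).comp
        ((LinearMap.rTensor M (TensorProduct.assoc R M M M).toLinearMap).comp
          (TensorProduct.assoc R (M ⊗[R] M) M M).symm.toLinearMap))
        (U.cop ⊗ₜ[R] U.cop))
    = ksign U.dl • (((LinearMap.rTensor M (TensorProduct.map (signAction 𝒜 U.dm) U.mu)).comp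
        ((LinearMap.rTensor M (TensorProduct.assoc R M M M).toLinearMap).comp
          (TensorProduct.assoc R (M ⊗[R] M) M M).symm.toLinearMap))
        (U.cop ⊗ₜ[R] U.cop))) ∧
    -- σ β = β
    (cyc 𝒜 (((LinearMap.rTensor M (TensorProduct.map (signAction 𝒜 U.dm) U.mu)).comp
        ((LinearMap.rTensor M (TensorProduct.assoc R M M M).toLinearMap).comp
          (TensorProduct.assoc R (M ⊗[R] M) M M).symm.toLinearMap))
        (U.cop ⊗ₜ[R] U.cop))
    = ((LinearMap.rTensor M (TensorProduct.map (signAction 𝒜 U.dm) U.mu)).comp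
        ((LinearMap.rTensor M (TensorProduct.assoc R M M M).toLinearMap).comp
          (TensorProduct.assoc R (M ⊗[R] M) M M).symm.toLinearMap))
        (U.cop ⊗ₜ[R] U.cop)) := by
  have hA := bigF_cop_left 𝒜 U U.cop
  constructor
  · rw [hA]
    have hcomp : (LinearMap.rTensor M (twist 𝒜)) ((LinearMap.rTensor M U.lam) U.cop) =
        (LinearMap.rTensor M ((twist 𝒜) ∘ₗ U.lam)) U.cop := by
      rw [LinearMap.rTensor_comp]; rfl
    rw [hcomp, hcocomm]
    have hz : LinearMap.rTensor M (ksign U.dl • U.lam) =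
        ksign U.dl • LinearMap.rTensor M U.lam := by
      apply TensorProduct.ext'
      intro a b
      simp only [LinearMap.rTensor_tmul, LinearMap.smul_apply]
      rw [← smul_tmul']
      rfl
    rw [hz]; rfl
  · rw [hA]
    have h1 := LinearMap.congr_fun (cyc_rTensor 𝒜 U.lam U.dl U.lam_homog) U.cop
    simp only [LinearMap.comp_apply, LinearEquiv.coe_coe] at h1
    rw [h1, U.cop_symm, map_zsmul, map_zsmul, map_zsmul, ← key_B 𝒜 U]

end GradedCoFrob
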